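/- Let A be a commutative Noetherian regular local ring of Krull dimension at most 2, and let M be a finitely generated reflexive A-module. Then M is a free A-module. -/

import Mathlib

open Function

open IsLocalRing Ideal

section DVRish
variable {B : Type*} [CommRing B] [IsNoetherianRing B] [IsLocalRing B]

lemma aux_unit_mul_pow {t : B} (ht : maximalIdeal B = span {t})
    {b : B} (hb : b ≠ 0) : ∃ (u : B) (i : ℕ), IsUnit u ∧ b = u * t ^ i := by
  have hKrull : ⨅ i : ℕ, (maximalIdeal B) ^ i = ⊥ :=
    Ideal.iInf_pow_eq_bot_of_isLocalRing _ (maximalIdeal.isMaximal B).ne_top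
  classical
  have hex : ∃ i : ℕ, b ∉ (maximalIdeal B) ^ i := by
    by_contra h
    push_neg at h
    exact hb (by simpa [hKrull] using Ideal.mem_iInf.2 h)
  have hi₀ : b ∉ (maximalIdeal B) ^ (Nat.find hex) := Nat.find_spec hex
  have hpos : Nat.find hex ≠ 0 := by
    intro h
    rw [h, pow_zero] at hi₀
    exact hi₀ (by simp)
  obtain ⟨i, hi⟩ := Nat.exists_eq_succ_of_ne_zero hpos
  rw [hi] at hi₀
  have hmem : b ∈ (maximalIdeal B) ^ i := by
    by_contra h
    have h2 : Nat.find hex ≤ i := Nat.find_le h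
    omega
  rw [ht, Ideal.span_singleton_pow, Ideal.mem_span_singleton'] at hmem
  obtain ⟨u, hu⟩ := hmem
  refine ⟨u, i, ?_, hu.symm⟩
  by_contra hnu
  apply hi₀
  have hum : u ∈ maximalIdeal B := hnu
  rw [pow_succ]
  have h1 : t ^ i ∈ (maximalIdeal B) ^ i := by
    rw [ht, Ideal.span_singleton_pow]; exact mem_span_singleton_self _
  have h2 := Ideal.mul_mem_mul h1 hum
  rwa [mul_comm (t ^ i) u, hu] at h2

lemma aux_isDomain {t : B} (ht : maximalIdeal B = span {t})
    (hnil : ¬ IsNilpotent t) : IsDomain B := by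
  have : NoZeroDivisors B := by
    constructor
    intro a b hab
    by_contra h
    push_neg at h
    obtain ⟨ha, hb⟩ := h
    obtain ⟨u, i, hu, rfl⟩ := aux_unit_mul_pow ht ha
    obtain ⟨v, j, hv, rfl⟩ := aux_unit_mul_pow ht hb
    have h0 : t ^ (i + j) * (u * v) = 0 := by linear_combination hab
    exact hnil ⟨i + j, (IsUnit.mul_left_eq_zero (hu.mul hv)).mp h0⟩
  exact NoZeroDivisors.to_isDomain B

lemma aux_isPIR {t : B} (ht : maximalIdeal B = span {t}) : IsPrincipalIdealRing B := by
  classical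
  constructor
  intro J
  by_cases hJ : J = ⊥
  · exact ⟨0, by rw [hJ, Ideal.submodule_span_eq, ← Ideal.span_singleton_eq_bot.mpr rfl]⟩
  · have hex : ∃ i : ℕ, t ^ i ∈ J := by
      obtain ⟨b, hbJ, hb0⟩ := Submodule.exists_mem_ne_zero_of_ne_bot hJ
      obtain ⟨u, i, hu, rfl⟩ := aux_unit_mul_pow ht hb0
      exact ⟨i, by
        have := J.mul_mem_left ↑hu.unit⁻¹ hbJ
        rwa [← mul_assoc, IsUnit.val_inv_mul, one_mul] at this⟩
    refine ⟨t ^ (Nat.find hex), le_antisymm ?_ ?_⟩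
    · intro c hc
      by_cases hc0 : c = 0
      · simp [hc0]
      obtain ⟨u, j, hu, rfl⟩ := aux_unit_mul_pow ht hc0
      have htj : t ^ j ∈ J := by
        have := J.mul_mem_left ↑hu.unit⁻¹ hc
        rwa [← mul_assoc, IsUnit.val_inv_mul, one_mul] at this
      have hji : Nat.find hex ≤ j := Nat.find_le htj
      rw [Ideal.submodule_span_eq, Ideal.mem_span_singleton']
      exact ⟨u * t ^ (j - Nat.find hex), by rw [mul_assoc, ← pow_add]; congr 2; omega⟩
    · rw [Ideal.submodule_span_eq, Ideal.span_le, Set.singleton_subset_iff]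
      exact Nat.find_spec hex

lemma aux_ideal_classify {t : B} (ht : maximalIdeal B = span {t}) {k : ℕ} (hk : t ^ k = 0)
    (J : Ideal B) : ∃ i, i ≤ k ∧ J = span {t ^ i} := by
  classical
  by_cases hJ : J = ⊥
  · exact ⟨k, le_rfl, by rw [hJ, hk, ← Ideal.span_singleton_eq_bot.mpr rfl]⟩
  · have hex : ∃ i : ℕ, t ^ i ∈ J := ⟨k, by simp [hk]⟩
    refine ⟨Nat.find hex, Nat.find_le (by simp [hk]), le_antisymm ?_ ?_⟩
    · intro c hc
      by_cases hc0 : c = 0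
      · simp [hc0]
      obtain ⟨u, j, hu, rfl⟩ := aux_unit_mul_pow ht hc0
      have htj : t ^ j ∈ J := by
        have := J.mul_mem_left ↑hu.unit⁻¹ hc
        rwa [← mul_assoc, IsUnit.val_inv_mul, one_mul] at this
      have hji : Nat.find hex ≤ j := Nat.find_le htj
      rw [Ideal.mem_span_singleton']
      exact ⟨u * t ^ (j - Nat.find hex), by rw [mul_assoc, ← pow_add]; congr 2; omega⟩
    · rw [Ideal.span_le, Set.singleton_subset_iff]
      exact Nat.find_spec hex

end DVRish

section PIT
variable {A : Type*} [CommRing A] [IsNoetherianRing A] [IsLocalRing A]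

/-- Special case of Krull's principal ideal theorem: if every prime containing `x` is the
maximal ideal, there is no chain `p₀ < p₁ < maximalIdeal`. -/
lemma aux_pit {x : A} {p₀ p₁ : Ideal A} (h₀ : p₀.IsPrime) (h₁ : p₁.IsPrime)
    (hlt0 : p₀ < p₁) (hlt1 : p₁ < maximalIdeal A) (hxm : x ∈ maximalIdeal A)
    (hq : ∀ q : Ideal A, q.IsPrime → x ∈ q → q = maximalIdeal A)
    (hart : ∀ c : ℕ → Ideal A, (∀ n, c (n + 1) ≤ c n) → (∀ n, span {x} ≤ c n) →
      ∃ N, c (N + 1) = c N) : False := by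
  have hx1 : x ∉ p₁ := fun hx => hlt1.ne (hq p₁ h₁ hx)
  haveI : IsNoetherianRing (Localization.AtPrime p₁) :=
    IsLocalization.isNoetherianRing p₁.primeCompl (Localization.AtPrime p₁) ‹_›
  set R := Localization.AtPrime p₁ with hR
  set φ := algebraMap A R with hφ
  set q : ℕ → Ideal A := fun n => comap φ (map φ (p₁ ^ n)) with hqdef
  have hqmono : ∀ n, q (n + 1) ≤ q n := fun n =>
    comap_mono (map_mono (Ideal.pow_le_pow_right (Nat.le_succ n)))
  obtain ⟨N, hN⟩ := hart (fun n => q n ⊔ span {x}) (fun n => sup_le_sup_right (hqmono n) _)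
    (fun n => le_sup_right)
  have hux : IsUnit (φ x) := IsLocalization.map_units (M := p₁.primeCompl) R ⟨x, hx1⟩
  have key : q N ≤ q (N + 1) ⊔ (maximalIdeal A) • (q N) := by
    intro a ha
    have ha' : a ∈ q (N + 1) ⊔ span {x} := hN ▸ Submodule.mem_sup_left ha
    obtain ⟨b, hb, z, hz, rfl⟩ := Submodule.mem_sup.1 ha'
    obtain ⟨s, rfl⟩ := Ideal.mem_span_singleton'.1 hz
    have hsx : s * x ∈ q N := by
      have := Submodule.sub_mem _ ha (hqmono N hb)
      simpa using this
    have hs : s ∈ q N := by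
      have h3 : φ s * φ x ∈ map φ (p₁ ^ N) := by
        rw [← _root_.map_mul]; exact hsx
      have h4 := Ideal.mul_mem_right (↑hux.unit⁻¹) _ h3
      rwa [mul_assoc, hux.mul_val_inv, mul_one] at h4
    refine Submodule.add_mem _ (Submodule.mem_sup_left hb) (Submodule.mem_sup_right ?_)
    rw [Ideal.smul_eq_mul, mul_comm s x]
    exact Ideal.mul_mem_mul hxm hs
  have key' : q N ≤ q (N + 1) :=
    Submodule.le_of_le_smul_of_le_jacobson_bot (IsNoetherian.noetherian _)
      (by rw [IsLocalRing.jacobson_eq_maximalIdeal (⊥ : Ideal A) bot_ne_top]) key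
  have hPle : (map φ p₁) ^ N ≤ (map φ p₁) ^ (N + 1) := by
    rw [← Ideal.map_pow, ← Ideal.map_pow]
    calc map φ (p₁ ^ N) ≤ map φ (q N) := map_mono Ideal.le_comap_map
      _ ≤ map φ (q (N + 1)) := map_mono key'
      _ ≤ map φ (p₁ ^ (N + 1)) := Ideal.map_comap_le
  have hmax : map φ p₁ = maximalIdeal R := Localization.AtPrime.map_eq_maximalIdeal
  have hbot : (map φ p₁) ^ N = ⊥ := by
    refine Submodule.eq_bot_of_le_smul_of_le_jacobson_bot (maximalIdeal R) _
      (IsNoetherian.noetherian _) ?_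
      (by rw [IsLocalRing.jacobson_eq_maximalIdeal (⊥ : Ideal R) bot_ne_top])
    calc (map φ p₁) ^ N ≤ (map φ p₁) ^ (N + 1) := hPle
      _ = maximalIdeal R • (map φ p₁) ^ N := by
          rw [Ideal.smul_eq_mul, ← hmax, ← pow_succ']
  have hN0 : N ≠ 0 := by
    intro h
    rw [h, pow_zero, Ideal.one_eq_top] at hbot
    have h1 : (1 : R) = 0 := by
      have h2 : (1 : R) ∈ (⊥ : Ideal R) := hbot ▸ Submodule.mem_top
      simpa using h2
    exact one_ne_zero h1
  have hdisj : Disjoint (p₁.primeCompl : Set A) (p₀ : Set A) := by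
    rw [Set.disjoint_left]
    intro a hac ha0
    exact hac (hlt0.le ha0)
  have hdisj₁ : Disjoint (p₁.primeCompl : Set A) (p₁ : Set A) := by
    rw [Set.disjoint_left]
    intro a hac ha0
    exact hac ha0
  have hp₀' : (map φ p₀).IsPrime := IsLocalization.isPrime_of_isPrime_disjoint p₁.primeCompl R p₀ h₀ hdisj
  have hPle' : map φ p₁ ≤ map φ p₀ := by
    have : (map φ p₁) ^ N ≤ map φ p₀ := hbot ▸ bot_le
    exact (Ideal.IsPrime.pow_le_iff hN0).mp this
  have hcomap : p₁ ≤ p₀ := by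
    have h1 : comap φ (map φ p₁) = p₁ :=
      IsLocalization.comap_map_of_isPrime_disjoint p₁.primeCompl R h₁ hdisj₁
    have h0 : comap φ (map φ p₀) = p₀ :=
      IsLocalization.comap_map_of_isPrime_disjoint p₁.primeCompl R h₀ hdisj
    rw [← h1, ← h0]
    exact comap_mono hPle'
  exact absurd hcomap hlt0.not_ge

end PIT

section Reflexive
variable {A M : Type*} [CommRing A] [AddCommGroup M] [Module A M]

lemma aux_noZeroSMulDivisors [IsDomain A] (hrefl : Module.IsReflexive A M) :
    NoZeroSMulDivisors A M := by
  constructor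
  intro a m hm
  by_contra h
  push_neg at h
  obtain ⟨ha, hm0⟩ := h
  apply hm0
  have heval : Module.Dual.eval A M m = 0 := by
    ext f
    have h1 : a • f m = 0 := by rw [← map_smul, hm, map_zero]
    have h2 : a * f m = 0 := by simpa [smul_eq_mul] using h1
    rcases mul_eq_zero.1 h2 with h | h
    · exact absurd h ha
    · simpa using h
  have := hrefl.bijective_dual_eval'.injective
  have h0 : Module.Dual.eval A M m = Module.Dual.eval A M 0 := by simpa using heval
  simpa using this h0

lemma aux_embedding [IsDomain A] [IsNoetherianRing A] [Module.Finite A M]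
    (hrefl : Module.IsReflexive A M) :
    ∃ (n : ℕ) (j : M →ₗ[A] (Fin n → A)), Injective j ∧
      ∀ (x : A) (v : Fin n → A) (m : M), x ≠ 0 → j m = x • v → ∃ m', j m' = v := by
  classical
  -- the dual module is finitely generated
  haveI hfd : Module.Finite A (Module.Dual A M) := by
    obtain ⟨m0, p, hp⟩ := Module.Finite.exists_fin' A M
    haveI : Module.Finite A (Module.Dual A (Fin m0 → A)) :=
      Module.Finite.of_basis (Pi.basisFun A (Fin m0)).dualBasis
    refine Module.Finite.of_injective p.dualMap ?_
    intro f g hfg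
    ext y
    obtain ⟨c, rfl⟩ := hp y
    exact LinearMap.congr_fun hfg c
  obtain ⟨n, s, hs⟩ := Module.Finite.exists_fin (R := A) (M := Module.Dual A M)
  set π : (Fin n → A) →ₗ[A] Module.Dual A M := Fintype.linearCombination A s with hπdef
  have hπsurj : Surjective π := by
    rw [← LinearMap.range_eq_top, hπdef, Fintype.range_linearCombination, hs]
  set j : M →ₗ[A] (Fin n → A) := LinearMap.pi (fun i => s i) with hjdef
  have hj_apply : ∀ m i, j m i = s i m := fun m i => rfl
  have hjinj : Injective j := by
    intro m₁ m₂ h12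
    have hz : ∀ i, s i (m₁ - m₂) = 0 := by
      intro i
      have hi := congrFun h12 i
      rw [hj_apply, hj_apply] at hi
      simp [map_sub, hi]
    have hall : ∀ f : Module.Dual A M, f (m₁ - m₂) = 0 := by
      intro f
      have hfmem : f ∈ Submodule.span A (Set.range s) := hs ▸ Submodule.mem_top
      induction hfmem using Submodule.span_induction with
      | mem g hg => obtain ⟨i, rfl⟩ := hg; exact hz i
      | zero => simp
      | add g₁ g₂ _ _ ih1 ih2 => simp [ih1, ih2]
      | smul a g _ ih => simp [ih]
    have heval : Module.Dual.eval A M (m₁ - m₂) = Module.Dual.eval A M 0 := by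
      ext f
      simpa using hall f
    have h0 := hrefl.bijective_dual_eval'.injective heval
    rwa [sub_eq_zero] at h0
  refine ⟨n, j, hjinj, ?_⟩
  intro x v m hx hxv
  set ψ : (Fin n → A) →ₗ[A] A := Fintype.linearCombination A v with hψdef
  have hsv : ∀ i, s i m = x * v i := by
    intro i
    have hi := congrFun hxv i
    rw [hj_apply] at hi
    simpa using hi
  have hcomp : ∀ c : Fin n → A, (π c) m = x * ψ c := by
    intro c
    rw [hπdef, hψdef]
    simp only [Fintype.linearCombination_apply, LinearMap.sum_apply, LinearMap.smul_apply,
      smul_eq_mul]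
    rw [Finset.mul_sum]
    refine Finset.sum_congr rfl fun i _ => ?_
    rw [hsv i]
    ring
  have hker : LinearMap.ker π ≤ LinearMap.ker ψ := by
    intro c hc
    have h1 : (π c) m = 0 := by rw [LinearMap.mem_ker.1 hc]; rfl
    rw [hcomp c] at h1
    rcases mul_eq_zero.1 h1 with h | h
    · exact absurd h hx
    · simpa using h
  set e := π.quotKerEquivOfSurjective hπsurj with hedef
  have he : ∀ c, e (Submodule.Quotient.mk c) = π c := by
    intro c
    rw [hedef]
    rfl
  set φd : Module.Dual A (Module.Dual A M) :=
    ((LinearMap.ker π).liftQ ψ hker) ∘ₗ (e.symm : Module.Dual A M →ₗ[A] _) with hφddef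
  have hφπ : ∀ c, φd (π c) = ψ c := by
    intro c
    have h1 : e.symm (π c) = Submodule.Quotient.mk c := by
      apply e.injective
      rw [LinearEquiv.apply_symm_apply, he]
    rw [hφddef]
    simp only [LinearMap.coe_comp, Function.comp_apply, LinearEquiv.coe_coe]
    rw [h1, Submodule.liftQ_apply]
  obtain ⟨m', hm'⟩ := hrefl.bijective_dual_eval'.surjective φd
  refine ⟨m', funext fun i => ?_⟩
  have h1 : s i = π (Pi.single i 1) := by
    rw [hπdef, Fintype.linearCombination_apply_single, one_smul]
  have h2 : ψ (Pi.single i 1) = v i := by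
    rw [hψdef, Fintype.linearCombination_apply_single, one_smul]
  calc j m' i = s i m' := rfl
    _ = φd (s i) := by rw [← hm']; rfl
    _ = ψ (Pi.single i 1) := by rw [h1, hφπ]
    _ = v i := h2

end Reflexive

section Chains

lemma aux_exists_chain (A : Type*) [CommRing A] [Nontrivial A] (n : ℕ)
    (h : (n : WithBot ℕ∞) ≤ ringKrullDim A) :
    ∃ p : LTSeries (PrimeSpectrum A), n ≤ p.length := by
  by_contra hc
  push_neg at hc
  rcases Nat.eq_zero_or_pos n with rfl | hpos
  · exact absurd (hc (RelSeries.singleton _ (Classical.arbitrary _))) (Nat.not_lt_zero _)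
  have hdim : ringKrullDim A ≤ ((n - 1 : ℕ) : WithBot ℕ∞) := by
    rw [ringKrullDim, Order.krullDim_eq_iSup_length]
    have : ((n - 1 : ℕ) : WithBot ℕ∞) = (((n - 1 : ℕ) : ℕ∞) : WithBot ℕ∞) := by
      norm_cast
    rw [this]
    refine WithBot.coe_le_coe.mpr (iSup_le fun p => ?_)
    exact_mod_cast Nat.le_sub_one_of_lt (hc p)
  have h1 : (n : WithBot ℕ∞) ≤ ((n - 1 : ℕ) : WithBot ℕ∞) := h.trans hdim
  have h2 : n ≤ n - 1 := by exact_mod_cast h1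
  omega

end Chains

section QuotMax
variable {A : Type*} [CommRing A] [IsLocalRing A]

lemma aux_max_quotient (I : Ideal A) [Nontrivial (A ⧸ I)] [IsLocalRing (A ⧸ I)] :
    maximalIdeal (A ⧸ I) = (maximalIdeal A).map (Ideal.Quotient.mk I) := by
  have hI : I ≠ ⊤ := by
    intro h
    have h1 : (1 : A ⧸ I) = 0 := by
      rw [← map_one (Ideal.Quotient.mk I)]
      rw [Ideal.Quotient.eq_zero_iff_mem, h]
      trivial
    exact one_ne_zero h1
  have hIm : I ≤ maximalIdeal A := le_maximalIdeal hI
  apply le_antisymm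
  · intro z hz
    obtain ⟨a, rfl⟩ := Ideal.Quotient.mk_surjective z
    have ham : a ∈ maximalIdeal A := by
      by_contra ha
      have : IsUnit a := by
        rw [← IsLocalRing.notMem_maximalIdeal]
        exact ha
      exact (mem_maximalIdeal _).1 hz (this.map (Ideal.Quotient.mk I))
    exact Ideal.mem_map_of_mem _ ham
  · rw [Ideal.map_le_iff_le_comap]
    intro a ha
    rw [Ideal.mem_comap, mem_maximalIdeal, mem_nonunits_iff]
    intro hu
    obtain ⟨b, hb⟩ := isUnit_iff_exists_inv.1 hu
    obtain ⟨b', rfl⟩ := Ideal.Quotient.mk_surjective b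
    rw [← _root_.map_mul, ← map_one (Ideal.Quotient.mk I), Ideal.Quotient.mk_eq_mk_iff_sub_mem] at hb
    have h1 : (1 : A) = a * b' - (a * b' - 1) := by ring
    have : (1 : A) ∈ maximalIdeal A := by
      rw [h1]
      exact Submodule.sub_mem _ (Ideal.mul_mem_right _ _ ha) (hIm hb)
    exact (maximalIdeal.isMaximal A).ne_top (Ideal.eq_top_of_isUnit_mem _ this isUnit_one)

end QuotMax


/-- A commutative Noetherian local ring is regular if its maximal ideal can be generated by
(Krull dimension of the ring) many elements. -/
def IsRegularLocal (A : Type*) [CommRing A] [IsLocalRing A] : Prop :=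
  ∃ s : Finset A, Ideal.span (s : Set A) = IsLocalRing.maximalIdeal A ∧
    (s.card : WithBot ℕ∞) = ringKrullDim A

/-- Over a commutative Noetherian regular local ring of Krull dimension at
most `2`, every finitely generated reflexive module is free. -/
theorem reflexive_free_of_dim_le_two
    (A : Type*) [CommRing A] [IsLocalRing A] [IsNoetherianRing A]
    (hreg : IsRegularLocal A) (hdim : ringKrullDim A ≤ 2)
    (M : Type*) [AddCommGroup M] [Module A M] [Module.Finite A M]
    (hrefl : Module.IsReflexive A M) :
    Module.Free A M := by
  classical
  obtain ⟨s, hs, hcard⟩ := hreg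
  have hsle : s.card ≤ 2 := by
    rw [← hcard] at hdim
    have h22 : ((2 : ℕ) : WithBot ℕ∞) = (2 : WithBot ℕ∞) := by norm_cast
    rw [← h22] at hdim
    exact_mod_cast hdim
  rcases (by omega : s.card = 0 ∨ s.card = 1 ∨ s.card = 2) with h0 | h1 | h2
  -- dimension 0 : A is a field
  · rw [Finset.card_eq_zero] at h0
    subst h0
    rw [Finset.coe_empty, Ideal.span_empty] at hs
    have hfield : IsField A := IsLocalRing.isField_iff_maximalIdeal_eq.2 hs.symm
    letI := hfield.toField
    infer_instance
  -- dimension 1 : A is a DVR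
  · obtain ⟨x, hx⟩ := Finset.card_eq_one.1 h1
    subst hx
    rw [Finset.coe_singleton] at hs
    have ht : maximalIdeal A = Ideal.span {x} := hs.symm
    have hdim1 : (1 : WithBot ℕ∞) ≤ ringKrullDim A := by
      rw [← hcard, h1]
      norm_num
    obtain ⟨P, hP⟩ := aux_exists_chain A 1 (by exact_mod_cast hdim1)
    have hlt : P.toFun ⟨0, by omega⟩ < P.toFun ⟨1, by omega⟩ := P.strictMono (by
      simp [Fin.lt_def])
    have hnonnil : ¬ IsNilpotent x := by
      rintro ⟨k, hk⟩
      have hxp : x ∈ (P.toFun ⟨0, by omega⟩).asIdeal :=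
        (P.toFun ⟨0, by omega⟩).isPrime.mem_of_pow_mem k (by rw [hk]; exact zero_mem _)
      have hm0 : maximalIdeal A ≤ (P.toFun ⟨0, by omega⟩).asIdeal := by
        rw [ht, Ideal.span_le, Set.singleton_subset_iff]
        exact hxp
      have h1le : (P.toFun ⟨1, by omega⟩).asIdeal ≤ maximalIdeal A :=
        le_maximalIdeal (P.toFun ⟨1, by omega⟩).isPrime.ne_top
      have hlt' : (P.toFun ⟨0, by omega⟩).asIdeal < (P.toFun ⟨1, by omega⟩).asIdeal :=
        (PrimeSpectrum.asIdeal_lt_asIdeal _ _).mpr hlt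
      exact lt_irrefl _ (lt_of_le_of_lt hm0 (lt_of_lt_of_le hlt' h1le))
    haveI := aux_isDomain ht hnonnil
    haveI := aux_isPIR ht
    haveI := aux_noZeroSMulDivisors hrefl
    infer_instance
  -- dimension 2
  · obtain ⟨a, b, hab, hsab⟩ := Finset.card_eq_two.1 h2
    subst hsab
    have hsab' : (({a, b} : Finset A) : Set A) = ({a, b} : Set A) := by simp
    rw [hsab'] at hs
    have ham : a ∈ maximalIdeal A := hs ▸ Ideal.subset_span (by simp)
    have hbm : b ∈ maximalIdeal A := hs ▸ Ideal.subset_span (by simp)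
    -- a chain of primes p₀ < p₁ < maximalIdeal A
    have hdim2 : ((2 : ℕ) : WithBot ℕ∞) ≤ ringKrullDim A := le_of_eq (by rw [← hcard, h2])
    obtain ⟨P, hP⟩ := aux_exists_chain A 2 hdim2
    have hQ01 : (P.toFun ⟨0, by omega⟩).asIdeal < (P.toFun ⟨1, by omega⟩).asIdeal :=
      (PrimeSpectrum.asIdeal_lt_asIdeal _ _).mpr (P.strictMono (by simp [Fin.lt_def]))
    have hQ12 : (P.toFun ⟨1, by omega⟩).asIdeal < (P.toFun ⟨2, by omega⟩).asIdeal :=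
      (PrimeSpectrum.asIdeal_lt_asIdeal _ _).mpr (P.strictMono (by simp [Fin.lt_def]))
    have hQ2m : (P.toFun ⟨2, by omega⟩).asIdeal ≤ maximalIdeal A :=
      le_maximalIdeal (P.toFun ⟨2, by omega⟩).isPrime.ne_top
    obtain ⟨p₀, p₁, hp₀, hp₁, h01, h1m⟩ :
        ∃ p₀ p₁ : Ideal A, p₀.IsPrime ∧ p₁.IsPrime ∧ p₀ < p₁ ∧ p₁ < maximalIdeal A := by
      by_cases hQ : (P.toFun ⟨2, by omega⟩).asIdeal = maximalIdeal A
      · exact ⟨_, _, (P.toFun ⟨0, by omega⟩).isPrime, (P.toFun ⟨1, by omega⟩).isPrime,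
          hQ01, hQ ▸ hQ12⟩
      · exact ⟨_, _, (P.toFun ⟨1, by omega⟩).isPrime, (P.toFun ⟨2, by omega⟩).isPrime,
          hQ12, lt_of_le_of_ne hQ2m hQ⟩
    -- prime avoidance : find x ∈ m, x ∉ m², x in no minimal prime
    have hfinmin : (minimalPrimes A).Finite := minimalPrimes.finite_of_isNoetherianRing A
    obtain ⟨x, hxm, hxnot⟩ : ∃ x ∈ maximalIdeal A,
        x ∉ (maximalIdeal A) ^ 2 ∧ ∀ p ∈ minimalPrimes A, x ∉ p := by
      by_contra hcon
      push_neg at hcon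
      have hsub : (maximalIdeal A : Set A) ⊆
          ⋃ J ∈ (insert ((maximalIdeal A) ^ 2) hfinmin.toFinset : Finset (Ideal A)),
            (J : Set A) := by
        intro z hz
        rcases Classical.em (z ∈ (maximalIdeal A) ^ 2) with h | h
        · exact Set.mem_biUnion (Finset.mem_insert_self _ _) h
        · obtain ⟨p, hpmem, hpz⟩ := hcon z hz h
          exact Set.mem_biUnion
            (Finset.mem_insert_of_mem (hfinmin.mem_toFinset.2 hpmem)) hpz
      have := ((Ideal.subset_union_prime ((maximalIdeal A) ^ 2) ((maximalIdeal A) ^ 2)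
        (fun J hJ hJ1 _ => by
          have : J ∈ minimalPrimes A := hfinmin.mem_toFinset.1 (by
            rcases Finset.mem_insert.1 hJ with h | h
            · exact absurd h hJ1
            · exact h)
          exact this.1.1)).1 hsub)
      obtain ⟨J, hJmem, hJle⟩ := this
      rcases Finset.mem_insert.1 hJmem with rfl | hJ
      · -- m ≤ m² : Nakayama gives m = ⊥, contradicting the chain
        have hbot : maximalIdeal A = ⊥ :=
          Submodule.eq_bot_of_le_smul_of_le_jacobson_bot (maximalIdeal A) (maximalIdeal A)
            (IsNoetherian.noetherian _)
            (by rw [Ideal.smul_eq_mul, ← pow_two]; exact hJle)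
            (by rw [IsLocalRing.jacobson_eq_maximalIdeal (⊥ : Ideal A) bot_ne_top])
        rw [hbot] at h1m
        exact not_lt_bot (lt_trans h01 h1m)
      · -- m is a minimal prime, contradicting p₁ < m
        have hJmin : J ∈ minimalPrimes A := hfinmin.mem_toFinset.1 hJ
        have hJm : J = maximalIdeal A :=
          le_antisymm (le_maximalIdeal hJmin.1.1.ne_top) hJle
        rw [minimalPrimes_eq_minimals] at hJmin
        have := hJmin.2 hp₁ (hJm ▸ h1m.le)
        rw [hJm] at this
        exact h1m.not_ge this
    obtain ⟨hx2, hxnotmin⟩ := hxnot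
    -- m = span {x, y} for a suitable y
    obtain ⟨u, v, huv⟩ := Ideal.mem_span_pair.1
      (show x ∈ Ideal.span ({a, b} : Set A) by rw [hs]; exact hxm)
    obtain ⟨y, hym, hmxy⟩ : ∃ y, y ∈ maximalIdeal A ∧ maximalIdeal A = Ideal.span {x, y} := by
      by_cases hu : u ∈ maximalIdeal A
      · by_cases hv : v ∈ maximalIdeal A
        · exfalso
          apply hx2
          rw [pow_two, ← huv]
          exact Submodule.add_mem _ (Ideal.mul_mem_mul hu ham) (Ideal.mul_mem_mul hv hbm)
        · -- v is a unit ; m = span {x, a}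
          have hvu : IsUnit v := IsLocalRing.notMem_maximalIdeal.1 hv
          refine ⟨a, ham, le_antisymm ?_ ?_⟩
          · rw [← hs, Ideal.span_le]
            intro z hz
            rcases Set.mem_insert_iff.1 hz with h | h
            · rw [h]; exact Ideal.subset_span (by simp)
            · rw [Set.mem_singleton_iff.1 h]
              set w : A := ↑hvu.unit⁻¹ with hw
              have hwv : w * v = 1 := hvu.val_inv_mul
              exact Ideal.mem_span_pair.2 ⟨w, -(w * u), by linear_combination (-w) * huv + b * hwv⟩
          · rw [Ideal.span_le]
            intro z hz
            rcases Set.mem_insert_iff.1 hz with h | h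
            · rw [h]; exact hxm
            · rw [Set.mem_singleton_iff.1 h]; exact ham
      · -- u is a unit ; m = span {x, b}
        have hvu : IsUnit u := IsLocalRing.notMem_maximalIdeal.1 hu
        refine ⟨b, hbm, le_antisymm ?_ ?_⟩
        · rw [← hs, Ideal.span_le]
          intro z hz
          rcases Set.mem_insert_iff.1 hz with h | h
          · rw [h]
            set w : A := ↑hvu.unit⁻¹ with hw
            have hwv : w * u = 1 := hvu.val_inv_mul
            exact Ideal.mem_span_pair.2 ⟨w, -(w * v), by linear_combination (-w) * huv + a * hwv⟩
          · rw [Set.mem_singleton_iff.1 h]; exact Ideal.subset_span (by simp)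
        · rw [Ideal.span_le]
          intro z hz
          rcases Set.mem_insert_iff.1 hz with h | h
          · rw [h]; exact hxm
          · rw [Set.mem_singleton_iff.1 h]; exact hbm
    -- the quotient B = A ⧸ (x)
    have hIm : Ideal.span {x} ≤ maximalIdeal A := by
      rw [Ideal.span_le, Set.singleton_subset_iff]; exact hxm
    have hInetop : Ideal.span {x} ≠ ⊤ := fun h =>
      (maximalIdeal.isMaximal A).ne_top (top_le_iff.1 (h ▸ hIm))
    haveI : Nontrivial (A ⧸ Ideal.span {x}) := Ideal.Quotient.nontrivial_iff.mpr hInetop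
    haveI : IsLocalRing (A ⧸ Ideal.span {x}) :=
      IsLocalRing.of_surjective' _ Ideal.Quotient.mk_surjective
    have hmaxB : maximalIdeal (A ⧸ Ideal.span {x}) =
        Ideal.span {Ideal.Quotient.mk (Ideal.span {x}) y} := by
      rw [aux_max_quotient (Ideal.span {x}), hmxy, Ideal.map_span]
      have himg : (Ideal.Quotient.mk (Ideal.span {x})) '' ({x, y} : Set A) =
          ({0, Ideal.Quotient.mk (Ideal.span {x}) y} : Set (A ⧸ Ideal.span {x})) := by
        rw [Set.image_insert_eq, Set.image_singleton, Ideal.Quotient.eq_zero_iff_mem.2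
          (Ideal.mem_span_singleton_self x)]
      rw [himg, Ideal.span_insert, Ideal.span_singleton_eq_bot.mpr rfl, bot_sup_eq]
    -- the generator of the maximal ideal of B is not nilpotent
    have hnilt : ¬ IsNilpotent (Ideal.Quotient.mk (Ideal.span {x}) y) := by
      rintro ⟨k, hk⟩
      have hyk : y ^ k ∈ Ideal.span {x} := by
        rwa [← map_pow, Ideal.Quotient.eq_zero_iff_mem] at hk
      have hrad : maximalIdeal A ≤ (Ideal.span {x}).radical := by
        rw [hmxy, Ideal.span_le]
        intro z hz
        rcases Set.mem_insert_iff.1 hz with h | h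
        · rw [h]; exact Ideal.le_radical (Ideal.mem_span_singleton_self x)
        · rw [Set.mem_singleton_iff.1 h]; exact ⟨k, hyk⟩
      obtain ⟨k', hk'⟩ := Ideal.exists_pow_le_of_le_radical_of_fg_radical hrad
        (IsNoetherian.noetherian _)
      have hq : ∀ q : Ideal A, q.IsPrime → x ∈ q → q = maximalIdeal A := by
        intro q hqp hxq
        have hIq : Ideal.span {x} ≤ q := by
          rw [Ideal.span_le, Set.singleton_subset_iff]; exact hxq
        have hpow : maximalIdeal A ^ k' ≤ q := hk'.trans hIq
        have hk'0 : k' ≠ 0 := by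
          rintro rfl
          rw [pow_zero, Ideal.one_eq_top] at hpow
          exact hqp.ne_top (top_le_iff.1 hpow)
        exact le_antisymm (le_maximalIdeal hqp.ne_top) ((Ideal.IsPrime.pow_le_iff hk'0).1 hpow)
      have hart : ∀ c : ℕ → Ideal A, (∀ n, c (n + 1) ≤ c n) →
          (∀ n, Ideal.span {x} ≤ c n) → ∃ N, c (N + 1) = c N := by
        intro c hdesc hcx
        have hcomapeq : ∀ n, Ideal.comap (Ideal.Quotient.mk (Ideal.span {x}))
            ((c n).map (Ideal.Quotient.mk (Ideal.span {x}))) = c n := by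
          intro n
          rw [Ideal.comap_map_of_surjective _ Ideal.Quotient.mk_surjective]
          rw [← RingHom.ker_eq_comap_bot, Ideal.mk_ker]
          exact sup_eq_left.2 (hcx n)
        have hfinrange : (Set.range fun n => (c n).map (Ideal.Quotient.mk (Ideal.span {x}))).Finite := by
          apply Set.Finite.subset (Set.Finite.image
            (fun i => Ideal.span {(Ideal.Quotient.mk (Ideal.span {x}) y) ^ i}) (Set.finite_Iic k))
          rintro _ ⟨n, rfl⟩
          obtain ⟨i, hik, hi⟩ := aux_ideal_classify hmaxB hk ((c n).map (Ideal.Quotient.mk (Ideal.span {x})))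
          exact ⟨i, hik, hi.symm⟩
        obtain ⟨J, hJmem, hminJ⟩ := Set.Finite.exists_minimal hfinrange
          ⟨_, Set.mem_range_self 0⟩
        obtain ⟨N, hJN⟩ := hJmem
        have hJN' : (c N).map (Ideal.Quotient.mk (Ideal.span {x})) = J := hJN
        refine ⟨N, ?_⟩
        have hle' : (c (N + 1)).map (Ideal.Quotient.mk (Ideal.span {x})) ≤ J := by
          rw [← hJN']
          exact Ideal.map_mono (hdesc N)
        have heq' := (le_antisymm (hminJ (Set.mem_range_self (N + 1)) hle') hle' : J = _)
        have hmapeq : (c (N + 1)).map (Ideal.Quotient.mk (Ideal.span {x})) =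
            (c N).map (Ideal.Quotient.mk (Ideal.span {x})) := by
          rw [← hJN'] at heq'
          exact heq'.symm
        rw [← hcomapeq (N + 1), ← hcomapeq N, hmapeq]
      exact aux_pit hp₀ hp₁ h01 h1m hxm hq hart
    haveI hBdom : IsDomain (A ⧸ Ideal.span {x}) := aux_isDomain hmaxB hnilt
    haveI hBpir : IsPrincipalIdealRing (A ⧸ Ideal.span {x}) := aux_isPIR hmaxB
    have hIprime : (Ideal.span {x} : Ideal A).IsPrime :=
      (Ideal.Quotient.isDomain_iff_prime _).1 hBdom
    -- A is a domain
    haveI hAdom : IsDomain A := by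
      haveI := hIprime
      obtain ⟨p, hpmem, hpJ⟩ := Ideal.exists_minimalPrimes_le (bot_le : (⊥ : Ideal A) ≤ Ideal.span {x})
      have hpmin : p ∈ minimalPrimes A := hpmem
      have hp_prime : p.IsPrime := hpmin.1.1
      have hxp : x ∉ p := hxnotmin p hpmin
      have hple : p ≤ (maximalIdeal A) • p := by
        intro z hz
        obtain ⟨c, hc⟩ := Ideal.mem_span_singleton'.1 (hpJ hz)
        have hcp : c ∈ p := by
          rcases hp_prime.mem_or_mem (show c * x ∈ p by rw [hc]; exact hz) with h | h
          · exact h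
          · exact absurd h hxp
        rw [Ideal.smul_eq_mul]
        have := Ideal.mul_mem_mul hxm hcp
        rwa [mul_comm x c, hc] at this
      have hpbot : p = ⊥ :=
        Submodule.eq_bot_of_le_smul_of_le_jacobson_bot (maximalIdeal A) p
          (IsNoetherian.noetherian _) hple
          (by rw [IsLocalRing.jacobson_eq_maximalIdeal (⊥ : Ideal A) bot_ne_top])
      rw [hpbot] at hp_prime
      haveI : NoZeroDivisors A := ⟨fun {α β} h => by
        have := hp_prime.mem_or_mem (show α * β ∈ (⊥ : Ideal A) by simp [h])
        simpa using this⟩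
      exact NoZeroDivisors.to_isDomain A
    have hx0 : x ≠ 0 := fun h => hx2 (by rw [h]; exact zero_mem _)
    obtain ⟨n, j, hjinj, hsat⟩ := aux_embedding hrefl
    have hxreg : ∀ w : M, x • w = 0 → w = 0 := by
      intro w hw
      apply hjinj
      have h1 : j (x • w) = 0 := by rw [hw, map_zero]
      rw [map_smul] at h1
      have h2 : j w = 0 := by
        funext i
        have h3 : x * j w i = 0 := by
          have := congrFun h1 i
          simpa using this
        rcases mul_eq_zero.1 h3 with h | h
        · exact absurd h hx0
        · simpa using h
      rw [h2, map_zero]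
    -- membership in (x) • ⊤
    have hxsmul : ∀ z : M, z ∈ (Ideal.span {x}) • (⊤ : Submodule A M) → ∃ m₀ : M, z = x • m₀ := by
      intro z hz
      refine Submodule.smul_induction_on hz ?_ ?_
      · rintro r hr m -
        obtain ⟨c, hc⟩ := Ideal.mem_span_singleton'.1 hr
        exact ⟨c • m, by rw [smul_smul, mul_comm x c, hc]⟩
      · rintro z₁ z₂ ⟨m₁, rfl⟩ ⟨m₂, rfl⟩
        exact ⟨m₁ + m₂, by rw [smul_add]⟩
    -- the quotient module Q = M ⧸ (x)M as a module over B
    haveI hBQfin : Module.Finite (A ⧸ Ideal.span {x})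
        (M ⧸ (Ideal.span {x} • (⊤ : Submodule A M))) := by
      obtain ⟨k0, vv, hvv⟩ := Module.Finite.exists_fin (R := A) (M := M)
      have hspanQ : Submodule.span (A ⧸ Ideal.span {x})
          (Set.range fun i => (Submodule.Quotient.mk (vv i) :
            M ⧸ (Ideal.span {x} • (⊤ : Submodule A M)))) = ⊤ := by
        rw [eq_top_iff]
        rintro q -
        obtain ⟨z, rfl⟩ := Submodule.Quotient.mk_surjective _ q
        have hzmem : z ∈ Submodule.span A (Set.range vv) := hvv ▸ Submodule.mem_top
        induction hzmem using Submodule.span_induction with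
        | mem w hw =>
            obtain ⟨i, rfl⟩ := hw
            exact Submodule.subset_span ⟨i, rfl⟩
        | zero => simpa using Submodule.zero_mem _
        | add w₁ w₂ _ _ ih1 ih2 => simpa using Submodule.add_mem _ ih1 ih2
        | smul r w _ ih =>
            have heq : (Submodule.Quotient.mk (r • w) :
                M ⧸ (Ideal.span {x} • (⊤ : Submodule A M))) =
                (Ideal.Quotient.mk (Ideal.span {x}) r) • Submodule.Quotient.mk w := rfl
            rw [heq]
            exact Submodule.smul_mem _ _ ih
      exact ⟨by rw [← hspanQ]; exact Submodule.fg_span (Set.finite_range _)⟩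
    haveI hBQtf : NoZeroSMulDivisors (A ⧸ Ideal.span {x})
        (M ⧸ (Ideal.span {x} • (⊤ : Submodule A M))) := by
      refine ⟨fun {cc q} hcq => ?_⟩
      by_cases hc : cc = 0
      · exact Or.inl hc
      right
      obtain ⟨r, rfl⟩ := Ideal.Quotient.mk_surjective cc
      obtain ⟨w, rfl⟩ := Submodule.Quotient.mk_surjective _ q
      have hrI : r ∉ Ideal.span {x} := fun h => hc (Ideal.Quotient.eq_zero_iff_mem.2 h)
      have hmem : r • w ∈ Ideal.span {x} • (⊤ : Submodule A M) := by
        have hcq' : (Submodule.Quotient.mk (r • w) :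
            M ⧸ (Ideal.span {x} • (⊤ : Submodule A M))) = 0 := hcq
        rwa [Submodule.Quotient.mk_eq_zero] at hcq'
      obtain ⟨m₀, hm₀⟩ := hxsmul _ hmem
      have hj1 : j (r • w) = j (x • m₀) := by rw [hm₀]
      rw [map_smul, map_smul] at hj1
      have hcomp : ∀ i, j w i ∈ Ideal.span {x} := by
        intro i
        have h2 : r * j w i = x * j m₀ i := by
          have := congrFun hj1 i
          simpa using this
        have h3 : r * j w i ∈ Ideal.span {x} :=
          Ideal.mem_span_singleton'.2 ⟨j m₀ i, by rw [h2]; ring⟩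
        rcases hIprime.mem_or_mem h3 with h | h
        · exact absurd h hrI
        · exact h
      choose uu huu using fun i => Ideal.mem_span_singleton'.1 (hcomp i)
      have hjw : j w = x • uu := funext fun i => by
        rw [Pi.smul_apply, smul_eq_mul, ← huu i]; ring
      obtain ⟨w', hw'⟩ := hsat x uu w hx0 hjw
      have hwx : w = x • w' := hjinj (by rw [map_smul, hw', hjw])
      rw [Submodule.Quotient.mk_eq_zero, hwx]
      exact Submodule.smul_mem_smul (Ideal.mem_span_singleton_self x) Submodule.mem_top
    haveI hBQfree : Module.Free (A ⧸ Ideal.span {x})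
        (M ⧸ (Ideal.span {x} • (⊤ : Submodule A M))) :=
      Module.free_of_finite_type_torsion_free'
    set ι := Module.Free.ChooseBasisIndex (A ⧸ Ideal.span {x})
        (M ⧸ (Ideal.span {x} • (⊤ : Submodule A M))) with hι
    let cb : Module.Basis ι (A ⧸ Ideal.span {x}) (M ⧸ (Ideal.span {x} • (⊤ : Submodule A M))) :=
      Module.Free.chooseBasis _ _
    choose g hg using fun i => Submodule.Quotient.mk_surjective
      (Ideal.span {x} • (⊤ : Submodule A M)) (cb i)
    -- spanning
    have hspan : Submodule.span A (Set.range g) = ⊤ := by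
      have hsup : (⊤ : Submodule A M) ≤ Submodule.span A (Set.range g) ⊔
          (maximalIdeal A) • (⊤ : Submodule A M) := by
        rintro z -
        have hz : (Submodule.Quotient.mk z : M ⧸ (Ideal.span {x} • (⊤ : Submodule A M))) ∈
            Submodule.span (A ⧸ Ideal.span {x}) (Set.range cb) := by
          rw [cb.span_eq]; trivial
        have himg : ∀ q, q ∈ Submodule.span (A ⧸ Ideal.span {x}) (Set.range cb) →
            q ∈ Submodule.map (Submodule.mkQ (Ideal.span {x} • (⊤ : Submodule A M)))
              (Submodule.span A (Set.range g)) := by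
          intro q hq
          induction hq using Submodule.span_induction with
          | mem w hw =>
              obtain ⟨i, rfl⟩ := hw
              exact ⟨g i, Submodule.subset_span ⟨i, rfl⟩, hg i⟩
          | zero => exact zero_mem _
          | add q₁ q₂ _ _ ih1 ih2 => exact add_mem ih1 ih2
          | smul r q _ ih =>
              obtain ⟨r', rfl⟩ := Ideal.Quotient.mk_surjective r
              obtain ⟨w, hwmem, rfl⟩ := ih
              exact ⟨r' • w, Submodule.smul_mem _ _ hwmem, rfl⟩
        obtain ⟨w, hwmem, hwz⟩ := himg _ hz
        rw [Submodule.mkQ_apply] at hwz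
        have hsub : w - z ∈ Ideal.span {x} • (⊤ : Submodule A M) :=
          (Submodule.Quotient.eq _).1 hwz
        have : z = w - (w - z) := by abel
        rw [this]
        refine Submodule.sub_mem _ (Submodule.mem_sup_left hwmem)
          (Submodule.mem_sup_right (Submodule.smul_mono_left hIm hsub))
      have hle := Submodule.le_of_le_smul_of_le_jacobson_bot
        (Module.Finite.fg_top (R := A) (M := M))
        (by rw [IsLocalRing.jacobson_eq_maximalIdeal (⊥ : Ideal A) bot_ne_top]) hsup
      exact le_antisymm le_top hle
    -- linear independence
    have hxpow : ∀ (k : ℕ) (f : ι → A), (∑ i, f i • g i = 0) →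
        ∀ i, f i ∈ (Ideal.span {x} : Ideal A) ^ k := by
      intro k
      induction k with
      | zero => intro f _ i; rw [pow_zero, Ideal.one_eq_top]; trivial
      | succ k ih =>
        intro f hf i
        have hmodf : ∀ i', f i' ∈ Ideal.span {x} := by
          have h0 : ∑ i', (Ideal.Quotient.mk (Ideal.span {x}) (f i')) • (cb i') =
              (0 : M ⧸ (Ideal.span {x} • (⊤ : Submodule A M))) := by
            calc ∑ i', (Ideal.Quotient.mk (Ideal.span {x}) (f i')) • (cb i')
                = ∑ i', Submodule.mkQ (Ideal.span {x} • (⊤ : Submodule A M)) (f i' • g i') := by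
                  refine Finset.sum_congr rfl fun i' _ => ?_
                  rw [← hg i']
                  rfl
              _ = Submodule.mkQ (Ideal.span {x} • (⊤ : Submodule A M)) (∑ i', f i' • g i') :=
                  (map_sum _ _ _).symm
              _ = 0 := by rw [hf, map_zero]
          have hind := Fintype.linearIndependent_iff.1 cb.linearIndependent
            (fun i' => Ideal.Quotient.mk (Ideal.span {x}) (f i')) h0
          intro i'
          have := hind i'
          rwa [Ideal.Quotient.eq_zero_iff_mem] at this
        choose hh hhh using fun i' => Ideal.mem_span_singleton'.1 (hmodf i')
        have hsum : x • (∑ i', hh i' • g i') = 0 := by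
          rw [Finset.smul_sum, ← hf]
          refine Finset.sum_congr rfl fun i' _ => ?_
          rw [smul_smul, mul_comm x (hh i'), hhh i']
        have hik := ih hh (hxreg _ hsum) i
        rw [pow_succ, ← hhh i]
        exact Ideal.mul_mem_mul hik (Ideal.mem_span_singleton_self x)
    have hlin : LinearIndependent A g := by
      rw [Fintype.linearIndependent_iff]
      intro f hf i
      have hall : ∀ k, f i ∈ (maximalIdeal A) ^ k := fun k =>
        Ideal.pow_right_mono hIm k (hxpow k f hf i)
      have hbot : f i ∈ (⊥ : Ideal A) := by
        rw [← Ideal.iInf_pow_eq_bot_of_isLocalRing (maximalIdeal A)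
          (maximalIdeal.isMaximal A).ne_top]
        exact Ideal.mem_iInf.2 hall
      simpa using hbot
    exact Module.Free.of_basis (Module.Basis.mk hlin (by rw [hspan]))
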